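/- For every τ_A ∈ ℝ: (∫_{{A ≥ τ_A}} t dμ) / μ{A ≥ τ_A} = (α/σ_α)·H(τ_A/σ_α), (∫_{{A ≥ τ_A}} s dμ) / μ{A ≥ τ_A} = ((1−α)/σ_α)·H(τ_A/σ_α), and (∫_{{A ≥ τ_A}} Q dμ) / μ{A ≥ τ_A} = ((αβ + (1−α)(1−β))/σ_α)·H(τ_A/σ_α). -/

import Mathlib

open MeasureTheory ProbabilityTheory Real Set Filter

/-- Standard normal pdf. -/
noncomputable def phi (x : ℝ) : ℝ := Real.exp (-x ^ 2 / 2) / Real.sqrt (2 * Real.pi)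

/-- Standard normal cdf. -/
noncomputable def Phi (x : ℝ) : ℝ := ∫ y in Set.Iic x, phi y

/-- Standard normal hazard rate. -/
noncomputable def Haz (x : ℝ) : ℝ := phi x / (1 - Phi x)

/-- Product of three standard Gaussian measures on ℝ³, coordinates (t, s, z). -/
noncomputable def mu3 : Measure (ℝ × ℝ × ℝ) :=
  (gaussianReal 0 1).prod ((gaussianReal 0 1).prod (gaussianReal 0 1))

open scoped NNReal ENNReal

section Aux

lemma phi_alt : phi = fun x => Real.exp (-(1/2) * x ^ 2) * (Real.sqrt (2 * Real.pi))⁻¹ := by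
  funext x; rw [phi, div_eq_mul_inv]; ring_nf

lemma phi_nonneg (x : ℝ) : 0 ≤ phi x := by
  rw [phi]; positivity

lemma phi_meas : Measurable phi := by
  rw [phi_alt]; fun_prop

lemma gaussianPDFReal_eq_phi (x : ℝ) : gaussianPDFReal 0 1 x = phi x := by
  rw [gaussianPDFReal, phi]
  push_cast
  rw [mul_one, sub_zero, div_eq_mul_inv, mul_comm]
  ring_nf

lemma integrable_phi : Integrable phi := by
  rw [phi_alt]
  exact (integrable_exp_neg_mul_sq (by norm_num : (0:ℝ) < 1/2)).mul_const _

lemma integrable_phi_mul_id : Integrable (fun x => phi x * x) := by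
  have h := (integrable_mul_exp_neg_mul_sq (by norm_num : (0:ℝ) < 1/2)).mul_const
      ((Real.sqrt (2 * Real.pi))⁻¹)
  refine h.congr ?_
  filter_upwards with x
  rw [phi_alt]; ring

lemma integral_phi : ∫ x, phi x = 1 := by
  rw [phi_alt]
  rw [MeasureTheory.integral_mul_const]
  rw [show (fun x : ℝ => Real.exp (-(1/2) * x ^ 2)) = fun x : ℝ => Real.exp (-(1/2 : ℝ) * x ^ 2) from rfl]
  rw [integral_gaussian (1/2 : ℝ)]
  rw [show π / (1/2 : ℝ) = 2 * π by ring]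
  rw [mul_inv_cancel₀ (by positivity : Real.sqrt (2*π) ≠ 0)]

lemma hasDerivAt_negphi (x : ℝ) : HasDerivAt (fun y => -phi y) (phi x * x) x := by
  have h1 : HasDerivAt (fun y : ℝ => -y ^ 2 / 2) (-x) x := by
    have := ((hasDerivAt_pow 2 x).neg).div_const 2
    refine this.congr_deriv ?_
    norm_num
    ring
  have h2 := (h1.exp).div_const (Real.sqrt (2 * Real.pi))
  have h3 : HasDerivAt phi (Real.exp (-x ^ 2 / 2) * (-x) / Real.sqrt (2 * Real.pi)) x := h2
  have := h3.neg
  refine this.congr_deriv ?_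
  rw [phi]; ring

lemma tendsto_phi_atTop : Tendsto phi atTop (nhds 0) := by
  have h1 : Tendsto (fun y : ℝ => -y ^ 2 / 2) atTop atBot := by
    have : Tendsto (fun y : ℝ => y ^ 2 / 2) atTop atTop :=
      (tendsto_pow_atTop (two_ne_zero)).atTop_div_const (by norm_num)
    have h2 := tendsto_neg_atTop_atBot.comp this
    refine h2.congr (fun y => ?_)
    simp [Function.comp]; ring
  have h2 : Tendsto (fun y : ℝ => Real.exp (-y ^ 2 / 2)) atTop (nhds 0) :=
    Real.tendsto_exp_atBot.comp h1
  have h3 := h2.div_const (Real.sqrt (2 * Real.pi))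
  rw [zero_div] at h3
  exact h3

lemma integral_Ici_phi_mul_id (u : ℝ) : ∫ x in Ici u, phi x * x = phi u := by
  rw [integral_Ici_eq_integral_Ioi]
  have h := integral_Ioi_of_hasDerivAt_of_tendsto (f := fun y => -phi y)
    (f' := fun x => phi x * x) (a := u) (m := 0)
    ((hasDerivAt_negphi u).continuousAt.continuousWithinAt)
    (fun x _ => hasDerivAt_negphi x)
    (integrable_phi_mul_id.integrableOn)
    (by simpa using tendsto_phi_atTop.neg)
  simpa using h

lemma integral_Ici_phi (u : ℝ) : ∫ x in Ici u, phi x = 1 - Phi u := by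
  rw [integral_Ici_eq_integral_Ioi]
  have h := intervalIntegral.integral_Iic_add_Ioi (b := u) (f := phi)
    integrable_phi.integrableOn integrable_phi.integrableOn
  rw [integral_phi] at h
  rw [Phi]
  linarith

lemma Phi_le_one (u : ℝ) : 0 ≤ 1 - Phi u := by
  rw [← integral_Ici_phi]
  exact setIntegral_nonneg measurableSet_Ici (fun x _ => phi_nonneg x)

noncomputable abbrev stdG : Measure ℝ := gaussianReal 0 1

lemma stdG_eq : stdG = volume.withDensity (fun x => ((Real.toNNReal (phi x) : ℝ≥0) : ℝ≥0∞)) := by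
  rw [stdG, gaussianReal_of_var_ne_zero 0 one_ne_zero]
  congr 1
  funext x
  rw [gaussianPDF, gaussianPDFReal_eq_phi]
  rfl

lemma integral_stdG (g : ℝ → ℝ) : ∫ x, g x ∂stdG = ∫ x, phi x * g x := by
  rw [stdG_eq, integral_withDensity_eq_integral_smul (phi_meas.real_toNNReal) g]
  congr 1; funext x
  rw [NNReal.smul_def, Real.coe_toNNReal _ (phi_nonneg x)]
  rfl

lemma setIntegral_stdG (g : ℝ → ℝ) {s : Set ℝ} (hs : MeasurableSet s) :
    ∫ x in s, g x ∂stdG = ∫ x in s, phi x * g x := by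
  rw [stdG_eq, restrict_withDensity hs,
    integral_withDensity_eq_integral_smul (phi_meas.real_toNNReal) g]
  congr 1; funext x
  rw [NNReal.smul_def, Real.coe_toNNReal _ (phi_nonneg x)]
  rfl

lemma integral_id_stdG : ∫ x, x ∂stdG = 0 := by
  rw [integral_stdG]
  have h := integral_neg_eq_self (fun x => phi x * x) (volume : Measure ℝ)
  have h2 : ∫ x, phi (-x) * (-x) = - ∫ x, phi x * x := by
    rw [← integral_neg]
    congr 1; funext x
    have : phi (-x) = phi x := by rw [phi, phi]; ring_nf
    rw [this]; ring
  rw [h2] at h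
  linarith

lemma integrable_id_stdG : Integrable (fun x => x) stdG := by
  rw [stdG_eq]
  rw [integrable_withDensity_iff (by exact (phi_meas.real_toNNReal).coe_nnreal_ennreal)
    (by filter_upwards with x; exact ENNReal.coe_lt_top)]
  refine integrable_phi_mul_id.congr ?_
  filter_upwards with x
  rw [ENNReal.coe_toReal, Real.coe_toNNReal _ (phi_nonneg x)]
  ring

lemma setIntegral_id_stdG (u : ℝ) : ∫ x in Ici u, x ∂stdG = phi u := by
  rw [setIntegral_stdG _ measurableSet_Ici, integral_Ici_phi_mul_id]

lemma stdG_Ici (u : ℝ) : stdG (Ici u) = ENNReal.ofReal (1 - Phi u) := by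
  rw [stdG, gaussianReal_apply_eq_integral 0 one_ne_zero]
  congr 1
  rw [← integral_Ici_phi u]
  exact integral_congr_ae (ae_of_all _ fun x => gaussianPDFReal_eq_phi x)

/-- Rotation on ℝ² as a measurable equivalence. -/
noncomputable def rotE (a b : ℝ) (h : a ^ 2 + b ^ 2 = 1) : (ℝ × ℝ) ≃ᵐ (ℝ × ℝ) where
  toFun := fun p => (a * p.1 + b * p.2, -b * p.1 + a * p.2)
  invFun := fun p => (a * p.1 - b * p.2, b * p.1 + a * p.2)
  left_inv := fun p => by
    have : a * (a * p.1 + b * p.2) - b * (-b * p.1 + a * p.2) = p.1 := by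
      linear_combination p.1 * h
    have h2 : b * (a * p.1 + b * p.2) + a * (-b * p.1 + a * p.2) = p.2 := by
      linear_combination p.2 * h
    simp only; rw [this, h2]
  right_inv := fun p => by
    have : a * (a * p.1 - b * p.2) + b * (b * p.1 + a * p.2) = p.1 := by
      linear_combination p.1 * h
    have h2 : -b * (a * p.1 - b * p.2) + a * (b * p.1 + a * p.2) = p.2 := by
      linear_combination p.2 * h
    simp only; rw [this, h2]
  measurable_toFun := by simp only [Equiv.coe_fn_mk]; fun_prop
  measurable_invFun := by simp only [Equiv.coe_fn_symm_mk]; fun_prop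

lemma rotE_apply (a b : ℝ) (h : a ^ 2 + b ^ 2 = 1) (p : ℝ × ℝ) :
    rotE a b h p = (a * p.1 + b * p.2, -b * p.1 + a * p.2) := rfl

lemma rotE_symm_apply (a b : ℝ) (h : a ^ 2 + b ^ 2 = 1) (p : ℝ × ℝ) :
    (rotE a b h).symm p = (a * p.1 - b * p.2, b * p.1 + a * p.2) := rfl

lemma rotE_volume (a b : ℝ) (h : a ^ 2 + b ^ 2 = 1) :
    Measure.map (rotE a b h) (volume : Measure (ℝ × ℝ)) = volume := by
  have hL : (⇑(rotE a b h) : ℝ × ℝ → ℝ × ℝ)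
      = ⇑(Matrix.toLin (Module.Basis.finTwoProd ℝ) (Module.Basis.finTwoProd ℝ) !![a, b; -b, a]) := by
    funext p
    rw [Matrix.toLin_finTwoProd_apply]
    rfl
  have hdet : LinearMap.det (Matrix.toLin (Module.Basis.finTwoProd ℝ) (Module.Basis.finTwoProd ℝ)
      !![a, b; -b, a]) = 1 := by
    rw [LinearMap.det_toLin, Matrix.det_fin_two_of]
    nlinarith
  rw [hL, Measure.map_linearMap_addHaar_eq_smul_addHaar _ (by rw [hdet]; norm_num), hdet]
  simp

lemma map_withDensity_equiv {α β : Type*} [MeasurableSpace α] [MeasurableSpace β]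
    (μ : Measure α) (e : α ≃ᵐ β) (f : α → ℝ≥0∞) (hf : Measurable f) :
    Measure.map e (μ.withDensity f) = (Measure.map e μ).withDensity (f ∘ e.symm) := by
  ext s hs
  rw [Measure.map_apply e.measurable hs, withDensity_apply _ (hs.preimage e.measurable),
    withDensity_apply _ hs, setLIntegral_map hs (hf.comp e.symm.measurable) e.measurable]
  refine setLIntegral_congr_fun (hs.preimage e.measurable) (fun x _ => ?_)
  simp [Function.comp]

lemma stdG_prod_withDensity :
    stdG.prod stdG = (volume : Measure (ℝ × ℝ)).withDensity
      (fun p => gaussianPDF 0 1 p.1 * gaussianPDF 0 1 p.2) := by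
  refine Measure.prod_eq fun s t hs ht => ?_
  rw [Measure.volume_eq_prod, withDensity_apply _ (hs.prod ht), ← Measure.prod_restrict,
    lintegral_prod_mul (measurable_gaussianPDF 0 1).aemeasurable
      (measurable_gaussianPDF 0 1).aemeasurable,
    gaussianReal_apply 0 one_ne_zero s, gaussianReal_apply 0 one_ne_zero t]

lemma phi_mul_phi_of {u v x y : ℝ} (h : u ^ 2 + v ^ 2 = x ^ 2 + y ^ 2) :
    phi u * phi v = phi x * phi y := by
  rw [phi, phi, phi, phi, div_mul_div_comm, div_mul_div_comm, ← Real.exp_add, ← Real.exp_add]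
  have : -u ^ 2 / 2 + -v ^ 2 / 2 = -x ^ 2 / 2 + -y ^ 2 / 2 := by linarith
  rw [this]

lemma rot_mp (a b : ℝ) (h : a ^ 2 + b ^ 2 = 1) :
    MeasurePreserving (rotE a b h) (stdG.prod stdG) (stdG.prod stdG) := by
  refine ⟨(rotE a b h).measurable, ?_⟩
  have hm : Measurable (fun p : ℝ × ℝ => gaussianPDF 0 1 p.1 * gaussianPDF 0 1 p.2) :=
    ((measurable_gaussianPDF 0 1).comp measurable_fst).mul
      ((measurable_gaussianPDF 0 1).comp measurable_snd)
  rw [stdG_prod_withDensity,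
    map_withDensity_equiv _ (rotE a b h)
      (fun p => gaussianPDF 0 1 p.1 * gaussianPDF 0 1 p.2) hm,
    rotE_volume]
  congr 1
  funext p
  simp only [Function.comp, rotE_symm_apply]
  rw [gaussianPDF, gaussianPDF, gaussianPDF, gaussianPDF,
    ← ENNReal.ofReal_mul (gaussianPDFReal_nonneg _ _ _),
    ← ENNReal.ofReal_mul (gaussianPDFReal_nonneg _ _ _)]
  congr 1
  simp only [gaussianPDFReal_eq_phi]
  exact phi_mul_phi_of (by linear_combination (p.1 ^ 2 + p.2 ^ 2) * h)

lemma mu3_def : mu3 = stdG.prod (stdG.prod stdG) := rfl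

lemma integrable_comp_fst {β : Type*} [MeasurableSpace β] (ν : Measure β)
    [IsProbabilityMeasure ν] {f : ℝ → ℝ} (hf : Integrable f stdG) :
    Integrable (fun p : ℝ × β => f p.1) (stdG.prod ν) := by
  have h1 : Integrable f ((stdG.prod ν).map Prod.fst) := by
    rw [Measure.map_fst_prod]; simpa using hf
  exact (integrable_map_measure h1.aestronglyMeasurable measurable_fst.aemeasurable).mp h1

lemma integrable_comp_snd {β : Type*} [MeasurableSpace β] (ν : Measure β) [SFinite ν]
    {f : β → ℝ} (hf : Integrable f ν) :
    Integrable (fun p : ℝ × β => f p.2) (stdG.prod ν) := by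
  have h1 : Integrable f ((stdG.prod ν).map Prod.snd) := by
    rw [Measure.map_snd_prod]; simpa using hf
  exact (integrable_map_measure h1.aestronglyMeasurable measurable_snd.aemeasurable).mp h1

lemma I1 : Integrable (fun q : ℝ × ℝ × ℝ => q.1) mu3 :=
  integrable_comp_fst _ integrable_id_stdG
lemma I2 : Integrable (fun q : ℝ × ℝ × ℝ => q.2.1) mu3 :=
  integrable_comp_snd _ (integrable_comp_fst _ integrable_id_stdG)
lemma I3 : Integrable (fun q : ℝ × ℝ × ℝ => q.2.2) mu3 :=
  integrable_comp_snd _ (integrable_comp_snd _ integrable_id_stdG)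

lemma hset (u : ℝ) : {q : ℝ × ℝ × ℝ | u ≤ q.1} = (Ici u) ×ˢ (univ : Set (ℝ × ℝ)) := by
  ext q; simp

lemma E1 (u : ℝ) : ∫ q in {q : ℝ × ℝ × ℝ | u ≤ q.1}, q.1 ∂mu3 = phi u := by
  rw [hset, mu3_def, ← Measure.prod_restrict, Measure.restrict_univ,
    integral_fun_fst (f := fun x : ℝ => x), probReal_univ]
  simp [setIntegral_id_stdG u]

lemma E2 (u : ℝ) : ∫ q in {q : ℝ × ℝ × ℝ | u ≤ q.1}, q.2.1 ∂mu3 = 0 := by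
  rw [hset, mu3_def, ← Measure.prod_restrict, Measure.restrict_univ,
    integral_fun_snd (f := fun y : ℝ × ℝ => y.1),
    integral_fun_fst (f := fun x : ℝ => x), integral_id_stdG]
  simp

lemma E3 (u : ℝ) : ∫ q in {q : ℝ × ℝ × ℝ | u ≤ q.1}, q.2.2 ∂mu3 = 0 := by
  rw [hset, mu3_def, ← Measure.prod_restrict, Measure.restrict_univ,
    integral_fun_snd (f := fun y : ℝ × ℝ => y.2),
    integral_fun_snd (f := fun x : ℝ => x), integral_id_stdG]
  simp

lemma key_int (k₁ k₂ k₃ u : ℝ) (f : ℝ × ℝ × ℝ → ℝ)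
    (hf : ∀ q, f q = k₁ * q.1 + k₂ * q.2.1 + k₃ * q.2.2) :
    ∫ q in {q : ℝ × ℝ × ℝ | u ≤ q.1}, f q ∂mu3 = k₁ * phi u := by
  have hfe : f = fun q => k₁ * q.1 + k₂ * q.2.1 + k₃ * q.2.2 := funext hf
  have g1 : Integrable (fun q : ℝ × ℝ × ℝ => k₁ * q.1) mu3 := I1.const_mul k₁
  have g2 : Integrable (fun q : ℝ × ℝ × ℝ => k₂ * q.2.1) mu3 := I2.const_mul k₂
  have g3 : Integrable (fun q : ℝ × ℝ × ℝ => k₃ * q.2.2) mu3 := I3.const_mul k₃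
  have g12 : Integrable (fun q : ℝ × ℝ × ℝ => k₁ * q.1 + k₂ * q.2.1) mu3 := g1.add g2
  simp only [hfe]
  rw [integral_add g12.integrableOn g3.integrableOn,
    integral_add g1.integrableOn g2.integrableOn,
    MeasureTheory.integral_const_mul, MeasureTheory.integral_const_mul,
    MeasureTheory.integral_const_mul, E1, E2, E3]
  ring

lemma key_meas (u : ℝ) : mu3 {q : ℝ × ℝ × ℝ | u ≤ q.1} = ENNReal.ofReal (1 - Phi u) := by
  rw [hset, mu3_def, Measure.prod_prod, measure_univ, mul_one, stdG_Ici]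

end Aux

theorem stmt2 (α β σZ : ℝ) (hα : α ∈ Set.Ioo (0 : ℝ) 1) (hβ : β ∈ Set.Ioo (0 : ℝ) 1)
    (hσZ : 0 ≤ σZ)
    (A Q : ℝ × ℝ × ℝ → ℝ)
    (hA : A = fun p => α * p.1 + (1 - α) * p.2.1 + σZ * p.2.2)
    (hQ : Q = fun p => β * p.1 + (1 - β) * p.2.1)
    (σα : ℝ) (hσα : σα = Real.sqrt (α ^ 2 + (1 - α) ^ 2 + σZ ^ 2)) :
    ∀ τA : ℝ,
      (∫ p in {p : ℝ × ℝ × ℝ | τA ≤ A p}, p.1 ∂mu3) /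
          (mu3 {p : ℝ × ℝ × ℝ | τA ≤ A p}).toReal
        = α / σα * Haz (τA / σα) ∧
      (∫ p in {p : ℝ × ℝ × ℝ | τA ≤ A p}, p.2.1 ∂mu3) /
          (mu3 {p : ℝ × ℝ × ℝ | τA ≤ A p}).toReal
        = (1 - α) / σα * Haz (τA / σα) ∧
      (∫ p in {p : ℝ × ℝ × ℝ | τA ≤ A p}, Q p ∂mu3) /
          (mu3 {p : ℝ × ℝ × ℝ | τA ≤ A p}).toReal
        = (α * β + (1 - α) * (1 - β)) / σα * Haz (τA / σα) := by
  intro τA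
  obtain ⟨hα0, hα1⟩ := hα
  have hr2 : 0 < (1 - α) ^ 2 + σZ ^ 2 := by nlinarith
  set r : ℝ := Real.sqrt ((1 - α) ^ 2 + σZ ^ 2) with hrdef
  have hr : 0 < r := Real.sqrt_pos.mpr hr2
  have hrsq : r ^ 2 = (1 - α) ^ 2 + σZ ^ 2 := Real.sq_sqrt hr2.le
  have hσ2 : 0 < α ^ 2 + (1 - α) ^ 2 + σZ ^ 2 := by nlinarith
  have hσ : 0 < σα := hσα ▸ Real.sqrt_pos.mpr hσ2
  have hσsq : σα ^ 2 = α ^ 2 + (1 - α) ^ 2 + σZ ^ 2 := hσα ▸ Real.sq_sqrt hσ2.le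
  set a : ℝ := α / σα with hadef
  set b : ℝ := r / σα with hbdef
  set c : ℝ := (1 - α) / r with hcdef
  set d : ℝ := σZ / r with hddef
  have hσne : σα ≠ 0 := hσ.ne'
  have hrne : r ≠ 0 := hr.ne'
  have hab : a ^ 2 + (-b) ^ 2 = 1 := by
    rw [hadef, hbdef]
    field_simp
    linear_combination hσsq.symm + hrsq
  have hcd : c ^ 2 + (-d) ^ 2 = 1 := by
    rw [hcdef, hddef]
    field_simp
    try linear_combination hrsq.symm
  set Rfun : ℝ × ℝ × ℝ → ℝ × ℝ × ℝ := fun q =>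
    (a * q.1 - b * q.2.1,
      (c * (b * q.1 + a * q.2.1) - d * q.2.2, d * (b * q.1 + a * q.2.1) + c * q.2.2))
    with hRdef
  set Requiv : (ℝ × ℝ × ℝ) ≃ᵐ (ℝ × ℝ × ℝ) :=
    (MeasurableEquiv.prodAssoc.symm.trans
      (((rotE a (-b) hab).prodCongr (MeasurableEquiv.refl ℝ)).trans
        MeasurableEquiv.prodAssoc)).trans
      ((MeasurableEquiv.refl ℝ).prodCongr (rotE c (-d) hcd)) with hReqdef
  have hReq : ⇑Requiv = Rfun := by
    funext q
    show ((rotE a (-b) hab (q.1, q.2.1)).1,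
      rotE c (-d) hcd ((rotE a (-b) hab (q.1, q.2.1)).2, q.2.2)) = Rfun q
    simp only [rotE_apply, hRdef]
    exact Prod.ext (by ring) (Prod.ext (by ring) (by ring))
  have hmp : MeasurePreserving Rfun mu3 mu3 := by
    rw [← hReq]
    have mpAssoc := measurePreserving_prodAssoc stdG stdG stdG
    have mp1 := (rot_mp a (-b) hab).prod (MeasurePreserving.id stdG)
    have mp2 := (MeasurePreserving.id stdG).prod (rot_mp c (-d) hcd)
    have comp1 : MeasurePreserving
        (⇑MeasurableEquiv.prodAssoc ∘ (Prod.map ⇑(rotE a (-b) hab) id ∘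
          ⇑MeasurableEquiv.prodAssoc.symm)) mu3 mu3 := by
      rw [mu3_def]
      exact mpAssoc.comp (mp1.comp (mpAssoc.symm _))
    have comp2 : MeasurePreserving
        (Prod.map id ⇑(rotE c (-d) hcd) ∘ (⇑MeasurableEquiv.prodAssoc ∘
          (Prod.map ⇑(rotE a (-b) hab) id ∘ ⇑MeasurableEquiv.prodAssoc.symm))) mu3 mu3 := by
      refine MeasurePreserving.comp ?_ comp1
      rw [mu3_def]
      exact mp2
    exact comp2
  have hemb : MeasurableEmbedding Rfun := hReq ▸ Requiv.measurableEmbedding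
  have hSmeas : MeasurableSet {p : ℝ × ℝ × ℝ | τA ≤ A p} := by
    rw [hA]
    exact measurableSet_le measurable_const (by fun_prop)
  have h1 : α * a + (1 - α) * (c * b) + σZ * (d * b) = σα := by
    rw [hadef, hbdef, hcdef, hddef]
    field_simp
    linear_combination hσsq.symm
  have h2 : -(α * b) + (1 - α) * (c * a) + σZ * (d * a) = 0 := by
    rw [hadef, hbdef, hcdef, hddef]
    field_simp
    linear_combination (-α) * hrsq
  have h3 : -((1 - α) * d) + σZ * c = 0 := by
    rw [hcdef, hddef]
    ring
  have hAR : ∀ q : ℝ × ℝ × ℝ, A (Rfun q) = σα * q.1 := by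
    intro q
    rw [hA, hRdef]
    simp only
    linear_combination q.1 * h1 + q.2.1 * h2 + q.2.2 * h3
  have hpre : Rfun ⁻¹' {p : ℝ × ℝ × ℝ | τA ≤ A p} = {q : ℝ × ℝ × ℝ | τA / σα ≤ q.1} := by
    ext q
    simp only [Set.mem_preimage, Set.mem_setOf_eq, hAR q]
    rw [div_le_iff₀ hσ, mul_comm]
  have hden : (mu3 {p : ℝ × ℝ × ℝ | τA ≤ A p}).toReal = 1 - Phi (τA / σα) := by
    rw [← hmp.measure_preimage hSmeas.nullMeasurableSet, hpre, key_meas,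
      ENNReal.toReal_ofReal (Phi_le_one _)]
  have hnum : ∀ g : ℝ × ℝ × ℝ → ℝ, ∀ k₁ k₂ k₃ : ℝ,
      (∀ q, g (Rfun q) = k₁ * q.1 + k₂ * q.2.1 + k₃ * q.2.2) →
      ∫ p in {p : ℝ × ℝ × ℝ | τA ≤ A p}, g p ∂mu3 = k₁ * phi (τA / σα) := by
    intro g k₁ k₂ k₃ hg
    rw [← hmp.setIntegral_preimage_emb hemb g _, hpre]
    exact key_int k₁ k₂ k₃ _ _ hg
  have hcb : c * b = (1 - α) / σα := by
    rw [hcdef, hbdef]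
    field_simp
  have hK : β * a + (1 - β) * (c * b) = (α * β + (1 - α) * (1 - β)) / σα := by
    rw [hcb, hadef]
    field_simp
  refine ⟨?_, ?_, ?_⟩
  · rw [hnum (fun p => p.1) a (-b) 0 (fun q => by simp only [hRdef]; ring), hden,
      Haz, hadef, mul_div_assoc]
  · rw [hnum (fun p => p.2.1) (c * b) (c * a) (-d) (fun q => by simp only [hRdef]; ring),
      hden, hcb, Haz, mul_div_assoc]
  · rw [hnum Q (β * a + (1 - β) * (c * b)) (β * (-b) + (1 - β) * (c * a)) ((1 - β) * (-d))
      (fun q => by simp only [hQ, hRdef]; ring), hden, hK, Haz, mul_div_assoc]
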